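/- Let 𝓗 be a hypergraph, let e ∈ E(𝓗), and let 𝓗' be the hypergraph obtained from 𝓗 by adding a new vertex v' ∉ V(𝓗) and replacing the hyperedge e by e ∪ {v'}. Then the adaptive width does not increase: aw(𝓗') ≤ aw(𝓗). -/

import Mathlib

noncomputable section

/-! ### Hgraphs -/

/-- A hypergraph: a vertex set together with a set of nonempty hyperedges. -/
structure Hgraph (V : Type) where
  verts : Set V
  edges : Set (Set V)
  edge_nonempty : ∀ e ∈ edges, e.Nonempty
  edge_subset : ∀ e ∈ edges, e ⊆ verts

namespace Hgraph

variable {V : Type}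

/-- An independent set: no two of its vertices lie in a common hyperedge. -/
def IsIndepSet (H : Hgraph V) (I : Set V) : Prop :=
  I ⊆ H.verts ∧ ∀ u ∈ I, ∀ v ∈ I, u ≠ v → ∀ e ∈ H.edges, ¬(u ∈ e ∧ v ∈ e)

/-- The independence number `α`. -/
def indepNum (H : Hgraph V) : ℕ :=
  sSup {n | ∃ I : Set V, H.IsIndepSet I ∧ I.ncard = n}

/-- A fractional independent set: `μ : V(H) → [0,1]` with `∑_{v ∈ e} μ v ≤ 1` for each edge. -/
def IsFracIndep (H : Hgraph V) (μ : V → ℝ) : Prop :=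
  (∀ v, 0 ≤ μ v ∧ μ v ≤ 1) ∧ (∀ v, v ∉ H.verts → μ v = 0) ∧
    ∀ e ∈ H.edges, (∑ᶠ v ∈ e, μ v) ≤ 1

/-- The weight of a (fractional independent) vertex-weighting. -/
def weight (H : Hgraph V) (μ : V → ℝ) : ℝ := ∑ᶠ v ∈ H.verts, μ v

/-- The fractional independence number `α*`. -/
def fracIndepNum (H : Hgraph V) : ℝ :=
  sSup {w | ∃ μ : V → ℝ, H.IsFracIndep μ ∧ H.weight μ = w}

/-- A fractional edge cover of a set `X` of vertices. -/
def IsFracEdgeCover (H : Hgraph V) (X : Set V) (γ : Set V → ℝ) : Prop :=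
  (∀ e, 0 ≤ γ e) ∧ (∀ e, e ∉ H.edges → γ e = 0) ∧
    ∀ v ∈ X, 1 ≤ ∑ᶠ e ∈ {e ∈ H.edges | v ∈ e}, γ e

/-- The weight of an edge-weighting. -/
def coverWeight (H : Hgraph V) (γ : Set V → ℝ) : ℝ := ∑ᶠ e ∈ H.edges, γ e

/-- `ρ*_H(X)`: the fractional edge cover number of a set `X` of vertices. -/
def fracCoverOf (H : Hgraph V) (X : Set V) : ℝ :=
  sInf {w | ∃ γ : Set V → ℝ, H.IsFracEdgeCover X γ ∧ H.coverWeight γ = w}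

/-- The fractional edge cover number `ρ*(H)`. -/
def fracEdgeCoverNum (H : Hgraph V) : ℝ := H.fracCoverOf H.verts

/-- A tree decomposition of a hypergraph. -/
structure TreeDecomp (H : Hgraph V) where
  n : ℕ
  tree : SimpleGraph (Fin n)
  isTree : tree.IsTree
  bag : Fin n → Set V
  bag_subset : ∀ t, bag t ⊆ H.verts
  verts_covered : ∀ v ∈ H.verts, ∃ t, v ∈ bag t
  edges_covered : ∀ e ∈ H.edges, ∃ t, e ⊆ bag t
  bags_connected : ∀ (v : V) (t₁ t₂ : Fin n) (h₁ : v ∈ bag t₁) (h₂ : v ∈ bag t₂),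
    (tree.induce {t | v ∈ bag t}).Reachable ⟨t₁, h₁⟩ ⟨t₂, h₂⟩

/-- The `μ`-width of a tree decomposition: the maximum `μ`-weight of a bag. -/
def TreeDecomp.muWidth {H : Hgraph V} (td : H.TreeDecomp) (μ : V → ℝ) : ℝ :=
  ⨆ t, ∑ᶠ v ∈ td.bag t, μ v

/-- The `μ`-width of a hypergraph: minimum `μ`-width over tree decompositions. -/
def muWidth (H : Hgraph V) (μ : V → ℝ) : ℝ :=
  sInf {w | ∃ td : H.TreeDecomp, td.muWidth μ = w}

/-- The adaptive width `aw(H)`: supremum of the `μ`-widths over fractional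
independent sets `μ`. -/
def adaptiveWidth (H : Hgraph V) : ℝ :=
  sSup {w | ∃ μ : V → ℝ, H.IsFracIndep μ ∧ H.muWidth μ = w}

/-- The fractional hypertreewidth `fhtw(H)`. -/
def fhtw (H : Hgraph V) : ℝ :=
  sInf {w | ∃ td : H.TreeDecomp, (⨆ t, H.fracCoverOf (td.bag t)) = w}

/-- Add a new vertex `v'` to the hypergraph and replace the hyperedge `e` by `e ∪ {v'}`. -/
def extendEdge (H : Hgraph V) (e : Set V) (he : e ∈ H.edges) (v' : V) :
    Hgraph V where
  verts := insert v' H.verts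
  edges := (H.edges \ {e}) ∪ {insert v' e}
  edge_nonempty := by
    rintro f (⟨hf, -⟩ | hf)
    · exact H.edge_nonempty f hf
    · rw [Set.mem_singleton_iff] at hf; subst hf; exact ⟨v', Set.mem_insert _ _⟩
  edge_subset := by
    rintro f (⟨hf, -⟩ | hf)
    · exact (H.edge_subset f hf).trans (Set.subset_insert _ _)
    · rw [Set.mem_singleton_iff] at hf; subst hf
      exact Set.insert_subset_insert (H.edge_subset e he)

end Hgraph

/-! ### Digraphs -/

namespace Digraph

variable {V A B : Type}

/-- `u` reaches `v` by a directed path (possibly of length 0). -/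
def Reaches (G : Digraph V) (u v : V) : Prop := Relation.ReflTransGen G.Adj u v

/-- `R(u)`: the set of vertices reachable from `u` (including `u`). -/
def reachSet (G : Digraph V) (u : V) : Set V := {v | G.Reaches u v}

/-- The setoid whose classes are the strongly connected components. -/
def sccSetoid (G : Digraph V) : Setoid V where
  r u v := G.Reaches u v ∧ G.Reaches v u
  iseqv := ⟨fun _ => ⟨.refl, .refl⟩, fun h => ⟨h.2, h.1⟩,
    fun h₁ h₂ => ⟨h₁.1.trans h₂.1, h₂.2.trans h₁.2⟩⟩

/-- The condensation `H/∼`: the loop-free DAG obtained by contracting each strongly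
connected component to a single vertex. -/
def cond (G : Digraph V) : Digraph (Quotient G.sccSetoid) where
  Adj X Y := X ≠ Y ∧ ∃ a b, Quotient.mk G.sccSetoid a = X ∧
    Quotient.mk G.sccSetoid b = Y ∧ G.Adj a b

/-- `v` lies in a source component: its strongly connected component is not
reachable from any other component. -/
def InSourceComp (G : Digraph V) (v : V) : Prop := ∀ u, G.Reaches u v → G.Reaches v u

/-- `v` is a source: a vertex of in-degree `0`. -/
def IsSrc (G : Digraph V) (v : V) : Prop := ∀ u, ¬ G.Adj u v

/-- The reachability hypergraph `R(H)` of a digraph: vertices `V(H)`, one hyperedge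
`R(s)` for each (representative `s` of a) source component. -/
def reachHyp (G : Digraph V) : Hgraph V where
  verts := Set.univ
  edges := {e | ∃ s, G.InSourceComp s ∧ e = G.reachSet s}
  edge_nonempty := by rintro e ⟨s, -, rfl⟩; exact ⟨s, Relation.ReflTransGen.refl⟩
  edge_subset := fun e _ => Set.subset_univ e

/-- The contour `Γ(H)` of a digraph: the reachability hypergraph with all vertices of
source components deleted (empty hyperedges discarded). -/
def contour (G : Digraph V) : Hgraph V where
  verts := {v | ¬ G.InSourceComp v}
  edges := {e | (∃ s, G.InSourceComp s ∧
    e = G.reachSet s \ {v | G.InSourceComp v}) ∧ e.Nonempty}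
  edge_nonempty := fun _ he => he.2
  edge_subset := by rintro e ⟨⟨s, -, rfl⟩, -⟩ v hv; exact hv.2

/-- The reachability hypergraph of a DAG: one hyperedge `R(s)` for each in-degree `0`
vertex `s`. -/
def dagReachHyp (G : Digraph V) : Hgraph V where
  verts := Set.univ
  edges := {e | ∃ s, G.IsSrc s ∧ e = G.reachSet s}
  edge_nonempty := by rintro e ⟨s, -, rfl⟩; exact ⟨s, Relation.ReflTransGen.refl⟩
  edge_subset := fun e _ => Set.subset_univ e

/-- The contour of a DAG: the reachability hypergraph with all sources deleted. -/
def dagContour (G : Digraph V) : Hgraph V where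
  verts := {v | ¬ G.IsSrc v}
  edges := {e | (∃ s, G.IsSrc s ∧ e = G.reachSet s \ {v | G.IsSrc v}) ∧ e.Nonempty}
  edge_nonempty := fun _ he => he.2
  edge_subset := by rintro e ⟨⟨s, -, rfl⟩, -⟩ v hv; exact hv.2

/-- A homomorphism of digraphs: a map preserving arcs. -/
def IsHom (H : Digraph A) (G : Digraph B) (φ : A → B) : Prop :=
  ∀ ⦃u v⦄, H.Adj u v → G.Adj (φ u) (φ v)

/-- The tensor product of digraphs. -/
def tensor (G : Digraph A) (F : Digraph B) : Digraph (A × B) where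
  Adj x y := G.Adj x.1 y.1 ∧ F.Adj x.2 y.2

/-- The induced subdigraph on a set of vertices. -/
def induce (G : Digraph A) (S : Set A) : Digraph S where
  Adj a b := G.Adj a.1 b.1

/-- The quotient digraph `H/σ` of a digraph by a partition (setoid) of its vertices. -/
def quot (H : Digraph A) (σ : Setoid A) : Digraph (Quotient σ) where
  Adj X Y := ∃ a b, Quotient.mk σ a = X ∧ Quotient.mk σ b = Y ∧ H.Adj a b

/-- A loop-free digraph. -/
def LoopFree (H : Digraph A) : Prop := ∀ v, ¬ H.Adj v v

/-- A digraph without directed cycles (in particular, without loops). -/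
def IsAcyclic (H : Digraph A) : Prop := ∀ u v, H.Adj u v → ¬ H.Reaches v u

/-- A canonical DAG: a DAG in which every vertex has in-degree 0 or out-degree 0. -/
def IsCanonicalDAG (H : Digraph A) : Prop :=
  H.IsAcyclic ∧ ∀ v, (∀ u, ¬ H.Adj u v) ∨ (∀ u, ¬ H.Adj v u)

/-- `t` lies in a sink component: from its strongly connected component no other
component is reachable. -/
def IsSinkVert (H : Digraph A) (t : A) : Prop := ∀ v, H.Reaches t v → H.Reaches v t

/-- Sink deletion: delete all vertices of the strongly connected component of `t`. -/
def sinkDelete (H : Digraph A) (t : A) :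
    Digraph {v : A // ¬ (H.Reaches v t ∧ H.Reaches t v)} where
  Adj a b := H.Adj a.1 b.1

/-- Loop deletion: delete the loop at `u`. -/
def deleteLoop (H : Digraph A) (u : A) : Digraph A where
  Adj a b := H.Adj a b ∧ ¬(a = u ∧ b = u)

/-- The number of sources (in-degree `0` vertices) of the condensation `H/∼`. -/
def numSources (H : Digraph A) : ℕ :=
  {X : Quotient H.sccSetoid | ∀ Y, ¬ H.cond.Adj Y X}.ncard

end Digraph

/-- The number of homomorphisms from `H` to `G`. -/
def homCount {A B : Type} (H : Digraph A) (G : Digraph B) : ℕ :=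
  Nat.card {φ : A → B // H.IsHom G φ}

/-- Two digraphs are isomorphic: a bijection of the vertex sets preserving arcs in
both directions. -/
def DigraphIso {A B : Type} (H : Digraph A) (G : Digraph B) : Prop :=
  ∃ e : A ≃ B, ∀ u v, H.Adj u v ↔ G.Adj (e u) (e v)

/-- The number of subgraphs of `G` (pairs of a vertex subset and an arc subset of `G`
among those vertices) that are isomorphic to `H`. -/
def subCount {A B : Type} (H : Digraph A) (G : Digraph B) : ℕ :=
  Nat.card {p : Set B × (B → B → Prop) //
    (∀ a b, p.2 a b → a ∈ p.1 ∧ b ∈ p.1 ∧ G.Adj a b) ∧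
    DigraphIso H (Digraph.mk fun (a b : p.1) => p.2 a b)}

/-- The number of vertex subsets of `G` inducing a subgraph isomorphic to `H`. -/
def indSubCount {A B : Type} (H : Digraph A) (G : Digraph B) : ℕ :=
  Nat.card {S : Set B // DigraphIso H (G.induce S)}

/-- `H'` is an arc supergraph of the loop-free digraph `H`: a loop-free digraph on the
same vertex set whose arc set contains that of `H`. -/
def ArcSupergraph {A : Type} (H H' : Digraph A) : Prop :=
  H'.LoopFree ∧ ∀ u v, H.Adj u v → H'.Adj u v

/-- The setoid identifying exactly `u` and `v`. -/
def pairSetoid {A : Type} (u v : A) : Setoid A where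
  r a b := a = b ∨ (a ∈ ({u, v} : Set A) ∧ b ∈ ({u, v} : Set A))
  iseqv := by
    refine ⟨fun _ => Or.inl rfl, ?_, ?_⟩
    · rintro a b (rfl | ⟨h₁, h₂⟩)
      · exact Or.inl rfl
      · exact Or.inr ⟨h₂, h₁⟩
    · rintro a b c (rfl | ⟨h₁, h₂⟩) h
      · exact h
      · rcases h with rfl | ⟨h₃, h₄⟩
        · exact Or.inr ⟨h₁, h₂⟩
        · exact Or.inr ⟨h₁, h₄⟩

/-- Arc contraction: identify the endpoints of the arc `(u,v)`; arcs between `u` and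
`v` do not yield a loop. -/
def Digraph.contractArc {A : Type} (H : Digraph A) (u v : A) :
    Digraph (Quotient (pairSetoid u v)) where
  Adj X Y := ∃ a b, Quotient.mk (pairSetoid u v) a = X ∧ Quotient.mk (pairSetoid u v) b = Y ∧
    H.Adj a b ∧ ¬(a ≠ b ∧ a ∈ ({u, v} : Set A) ∧ b ∈ ({u, v} : Set A))

/-- `MRMinor M H`: `M` is a monotone reversible minor of `H`, i.e. `M` can be
obtained (up to isomorphism) from `H` by a finite sequence of sink deletions,
arc contractions, and loop deletions. -/
inductive MRMinor : ∀ {A : Type}, Digraph A → ∀ {B : Type}, Digraph B → Prop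
  | of_iso {A B : Type} {M : Digraph A} {H : Digraph B} :
      DigraphIso M H → MRMinor M H
  | sink_del {A B : Type} {M : Digraph A} {H : Digraph B} (t : B) :
      H.IsSinkVert t → MRMinor M (H.sinkDelete t) → MRMinor M H
  | contract {A B : Type} {M : Digraph A} {H : Digraph B} (u v : B) :
      H.Adj u v → MRMinor M (H.contractArc u v) → MRMinor M H
  | loop_del {A B : Type} {M : Digraph A} {H : Digraph B} (u : B) :
      H.Adj u u → MRMinor M (H.deleteLoop u) → MRMinor M H

/-- `SinkDelSeq H F`: `F` is obtained from `H` by a finite sequence of sink deletions. -/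
inductive SinkDelSeq : ∀ {A : Type}, Digraph A → ∀ {B : Type}, Digraph B → Prop
  | refl {A : Type} (H : Digraph A) : SinkDelSeq H H
  | step {A : Type} {H : Digraph A} (t : A) {B : Type} {F : Digraph B} :
      H.IsSinkVert t → SinkDelSeq (H.sinkDelete t) F → SinkDelSeq H F

/-- The directed split of an undirected graph `F`: vertices `V(F) ⊕ E(F)`, with arcs
from each edge `e = {u,v}` to `u` and to `v`. -/
def dsplit {α : Type} (F : SimpleGraph α) : Digraph (α ⊕ F.edgeSet) where
  Adj x y :=
    match x, y with
    | Sum.inr e, Sum.inl u => u ∈ e.1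
    | _, _ => False

/-- `D` has an induced matching gadget of size `k`: arcs `(s i, w i)` with the `w i`
pairwise distinct such that no source of `D` reaches two distinct `w i`. -/
def HasIMG {A : Type} (D : Digraph A) (k : ℕ) : Prop :=
  ∃ s w : Fin k → A, (∀ i, D.Adj (s i) (w i)) ∧ Function.Injective w ∧
    ∀ x, D.IsSrc x → ∀ i j, D.Reaches x (w i) → D.Reaches x (w j) → i = j

/-- The maximum size of an induced matching gadget of `D`. -/
def imgNum {A : Type} (D : Digraph A) : ℕ := sSup {k | HasIMG D k}

/-- A fractional cover of a DAG `D`: nonnegative weights on the sources such that each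
non-source is covered with total weight at least 1; the total weight is at least 1. -/
def Digraph.IsFracCover {A : Type} (D : Digraph A) (ψ : A → ℝ) : Prop :=
  (∀ s, 0 ≤ ψ s) ∧ (∀ s, ¬ D.IsSrc s → ψ s = 0) ∧
    (∀ v, ¬ D.IsSrc v → 1 ≤ ∑ᶠ s ∈ {s | D.IsSrc s ∧ v ∈ D.reachSet s}, ψ s) ∧
    1 ≤ ∑ᶠ s ∈ {s | D.IsSrc s}, ψ s

/-- The fractional cover number of a DAG: the minimum weight of a fractional cover. -/
def Digraph.dagFracCoverNum {A : Type} (D : Digraph A) : ℝ :=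
  sInf {w | ∃ ψ : A → ℝ, D.IsFracCover ψ ∧ (∑ᶠ s ∈ {s | D.IsSrc s}, ψ s) = w}

/-- The fractional cover number `ρ*(H)` of a digraph: the fractional cover number of
its condensation. -/
def Digraph.fracCoverNum {A : Type} (G : Digraph A) : ℝ := G.cond.dagFracCoverNum


open SimpleGraph

/-- Add a pendant leaf (the new vertex `Fin.last n`) attached to `t₀`. -/
def addLeaf {n : ℕ} (T : SimpleGraph (Fin n)) (t₀ : Fin n) : SimpleGraph (Fin (n + 1)) where
  Adj a b := (∃ (ha : a ≠ Fin.last n) (hb : b ≠ Fin.last n),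
      T.Adj (a.castPred ha) (b.castPred hb)) ∨
    (a = Fin.last n ∧ b = t₀.castSucc) ∨ (b = Fin.last n ∧ a = t₀.castSucc)
  symm := ⟨by
    rintro a b (⟨ha, hb, h⟩ | ⟨h1, h2⟩ | ⟨h1, h2⟩)
    · exact Or.inl ⟨hb, ha, h.symm⟩
    · exact Or.inr (Or.inr ⟨h1, h2⟩)
    · exact Or.inr (Or.inl ⟨h1, h2⟩)⟩
  loopless := ⟨by
    rintro a (⟨ha, hb, h⟩ | ⟨h1, h2⟩ | ⟨h1, h2⟩)
    · exact T.loopless.irrefl _ h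
    · exact (Fin.castSucc_lt_last t₀).ne' (h1.symm.trans h2)
    · exact (Fin.castSucc_lt_last t₀).ne' (h1.symm.trans h2)⟩

namespace addLeaf

variable {n : ℕ} {T : SimpleGraph (Fin n)} {t₀ : Fin n}

lemma adj_castSucc {a b : Fin n} (h : T.Adj a b) :
    (addLeaf T t₀).Adj a.castSucc b.castSucc :=
  Or.inl ⟨(Fin.castSucc_lt_last a).ne, (Fin.castSucc_lt_last b).ne, by
    rwa [Fin.castPred_castSucc, Fin.castPred_castSucc]⟩

lemma adj_last : (addLeaf T t₀).Adj (Fin.last n) t₀.castSucc := Or.inr (Or.inl ⟨rfl, rfl⟩)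

/-- Retraction collapsing the leaf onto `t₀`. -/
noncomputable def retr (t₀ : Fin n) (a : Fin (n + 1)) : Fin n :=
  if h : a = Fin.last n then t₀ else a.castPred h

lemma retr_last : retr t₀ (Fin.last n) = t₀ := dif_pos rfl
lemma retr_ne (a : Fin (n + 1)) (h : a ≠ Fin.last n) : retr t₀ a = a.castPred h := dif_neg h

lemma proj_adj {a₀ b₀ : Fin (n + 1)} (ha₀ : a₀ ≠ Fin.last n) (hb₀ : b₀ ≠ Fin.last n)
    {x y : Fin (n + 1)}
    (h : (addLeaf T t₀ \ fromEdgeSet {s(a₀, b₀)}).Adj x y) :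
    Relation.ReflTransGen
      (T \ fromEdgeSet {s(a₀.castPred ha₀, b₀.castPred hb₀)}).Adj
      (retr t₀ x) (retr t₀ y) := by
  obtain ⟨hadj, hne⟩ := h
  rw [fromEdgeSet_adj, Set.mem_singleton_iff] at hne
  rcases hadj with ⟨hx, hy, hT⟩ | ⟨h1, h2⟩ | ⟨h1, h2⟩
  · rw [retr_ne x hx, retr_ne y hy]
    refine Relation.ReflTransGen.single ⟨hT, ?_⟩
    rw [fromEdgeSet_adj, Set.mem_singleton_iff]
    rintro ⟨hs, -⟩
    refine hne ⟨?_, fun hxy => hT.ne (by simp [Fin.castPred_inj, hxy])⟩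
    rw [Sym2.eq_iff] at hs ⊢
    rcases hs with ⟨h1, h2⟩ | ⟨h1, h2⟩
    · exact Or.inl ⟨by rw [← Fin.castSucc_castPred x hx, h1, Fin.castSucc_castPred],
        by rw [← Fin.castSucc_castPred y hy, h2, Fin.castSucc_castPred]⟩
    · exact Or.inr ⟨by rw [← Fin.castSucc_castPred x hx, h1, Fin.castSucc_castPred],
        by rw [← Fin.castSucc_castPred y hy, h2, Fin.castSucc_castPred]⟩
  · subst h1 h2
    rw [retr_last, retr_ne _ (Fin.castSucc_lt_last t₀).ne, Fin.castPred_castSucc]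
  · subst h1 h2
    rw [retr_last, retr_ne _ (Fin.castSucc_lt_last t₀).ne, Fin.castPred_castSucc]

lemma proj_reach {a₀ b₀ : Fin (n + 1)} (ha₀ : a₀ ≠ Fin.last n) (hb₀ : b₀ ≠ Fin.last n)
    {x y : Fin (n + 1)}
    (h : (addLeaf T t₀ \ fromEdgeSet {s(a₀, b₀)}).Reachable x y) :
    (T \ fromEdgeSet {s(a₀.castPred ha₀, b₀.castPred hb₀)}).Reachable
      (retr t₀ x) (retr t₀ y) := by
  rw [reachable_iff_reflTransGen] at h ⊢
  induction h with
  | refl => exact Relation.ReflTransGen.refl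
  | tail _ h2 ih => exact ih.trans (proj_adj ha₀ hb₀ h2)

lemma adj_last_right {c : Fin (n + 1)} (h : (addLeaf T t₀).Adj (Fin.last n) c) :
    c = t₀.castSucc := by
  rcases h with ⟨ha, -, -⟩ | ⟨-, h2⟩ | ⟨h1, h2⟩
  · exact absurd rfl ha
  · exact h2
  · exact absurd h2.symm (Fin.castSucc_lt_last t₀).ne

lemma isTree (hT : T.IsTree) : (addLeaf T t₀).IsTree := by
  constructor
  · -- connected
    have key : ∀ a : Fin (n + 1), (addLeaf T t₀).Reachable a t₀.castSucc := by
      intro a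
      by_cases h : a = Fin.last n
      · subst h; exact (adj_last).reachable
      · have := hT.isConnected.preconnected (a.castPred h) t₀
        have hmap := this.map (⟨Fin.castSucc, fun hadj => adj_castSucc hadj⟩ : T →g addLeaf T t₀)
        change (addLeaf T t₀).Reachable ((a.castPred h).castSucc) (t₀.castSucc) at hmap
        rwa [Fin.castSucc_castPred a h] at hmap
    exact SimpleGraph.Connected.mk (fun a b => (key a).trans (key b).symm)
  · -- acyclic
    rw [isAcyclic_iff_forall_adj_isBridge]
    intro v w hadj
    rw [isBridge_iff]
    change ¬ (addLeaf T t₀ \ fromEdgeSet {s(v, w)}).Reachable v w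
    have leafcase : ∀ c : Fin (n + 1),
        ¬(addLeaf T t₀ \ fromEdgeSet {s(Fin.last n, t₀.castSucc)}).Reachable (Fin.last n) c
          ∨ c = Fin.last n := by
      intro c
      by_cases hc : c = Fin.last n
      · exact Or.inr hc
      left
      intro hreach
      rw [reachable_iff_reflTransGen] at hreach
      rcases hreach.cases_head with heq | ⟨d, hd, -⟩
      · exact hc heq.symm
      · obtain ⟨hd1, hd2⟩ := hd
        rw [fromEdgeSet_adj, Set.mem_singleton_iff] at hd2
        have hdc := adj_last_right hd1
        subst hdc
        exact hd2 ⟨rfl, (Fin.castSucc_lt_last t₀).ne'⟩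
    rcases hadj with ⟨hv, hw, hT'⟩ | ⟨h1, h2⟩ | ⟨h1, h2⟩
    · intro hreach
      have := proj_reach hv hw hreach
      rw [retr_ne v hv, retr_ne w hw] at this
      have hbridge := (isAcyclic_iff_forall_adj_isBridge.mp hT.IsAcyclic) hT'
      rw [isBridge_iff] at hbridge
      exact hbridge this
    · subst h1; subst h2
      intro hreach
      rcases leafcase t₀.castSucc with h | h
      · exact h hreach
      · exact (Fin.castSucc_lt_last t₀).ne h
    · subst h1; subst h2
      intro hreach
      rcases leafcase t₀.castSucc with h | h
      · rw [Sym2.eq_swap] at hreach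
        exact h hreach.symm
      · exact (Fin.castSucc_lt_last t₀).ne h

end addLeaf

section Aux

open Hgraph

variable {V : Type} [Fintype V]

lemma fsum_eq (s : Set V) (f : V → ℝ) :
    ∑ᶠ v ∈ s, f v = ∑ v ∈ (Set.toFinite s).toFinset, f v := by
  rw [← finsum_mem_coe_finset, Set.Finite.coe_toFinset]

/-- The trivial one-bag tree decomposition. -/
def trivTD (H : Hgraph V) : H.TreeDecomp where
  n := 1
  tree := ⊥
  isTree := ⟨SimpleGraph.Connected.mk (fun a b => by
      rw [Subsingleton.elim a b]), SimpleGraph.isAcyclic_bot⟩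
  bag := fun _ => H.verts
  bag_subset := fun _ => subset_rfl
  verts_covered := fun v hv => ⟨0, hv⟩
  edges_covered := fun f hf => ⟨0, H.edge_subset f hf⟩
  bags_connected := by
    intro v t₁ t₂ h₁ h₂
    have h : (⟨t₁, h₁⟩ : {t | v ∈ (fun _ => H.verts) t}) = ⟨t₂, h₂⟩ :=
      Subtype.ext (Subsingleton.elim _ _)
    rw [h]

lemma td_width_nonneg {H : Hgraph V} (td : H.TreeDecomp) {μ : V → ℝ}
    (hμ : ∀ v, 0 ≤ μ v) : 0 ≤ td.muWidth μ :=
  Real.iSup_nonneg fun t => by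
    rw [fsum_eq]; exact Finset.sum_nonneg fun v _ => hμ v

lemma width_bddBelow (H : Hgraph V) {μ : V → ℝ} (hμ : ∀ v, 0 ≤ μ v) :
    BddBelow {w | ∃ td : H.TreeDecomp, td.muWidth μ = w} :=
  ⟨0, by rintro w ⟨td, rfl⟩; exact td_width_nonneg td hμ⟩

lemma width_nonempty (H : Hgraph V) (μ : V → ℝ) :
    {w | ∃ td : H.TreeDecomp, td.muWidth μ = w}.Nonempty :=
  ⟨_, trivTD H, rfl⟩

lemma sum_le_card {s : Set V} {μ : V → ℝ} (hμ : ∀ v, μ v ≤ 1) (hμ0 : ∀ v, 0 ≤ μ v) :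
    ∑ᶠ v ∈ s, μ v ≤ (Fintype.card V : ℝ) := by
  rw [fsum_eq]
  calc ∑ v ∈ (Set.toFinite s).toFinset, μ v
      ≤ ∑ v ∈ (Set.toFinite s).toFinset, 1 := Finset.sum_le_sum fun v _ => hμ v
    _ = ((Set.toFinite s).toFinset.card : ℝ) := by simp
    _ ≤ (Fintype.card V : ℝ) := by
        exact_mod_cast Nat.cast_le.mpr (Finset.card_le_univ _)

lemma muWidth_le_card (H : Hgraph V) {μ : V → ℝ}
    (hμ : ∀ v, μ v ≤ 1) (hμ0 : ∀ v, 0 ≤ μ v) :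
    H.muWidth μ ≤ (Fintype.card V : ℝ) := by
  refine (csInf_le (width_bddBelow H hμ0) ⟨trivTD H, rfl⟩).trans ?_
  haveI : Nonempty (Fin (trivTD H).n) := ⟨⟨0, Nat.one_pos⟩⟩
  exact ciSup_le fun _ => sum_le_card hμ hμ0

lemma aw_bddAbove (H : Hgraph V) :
    BddAbove {w | ∃ μ : V → ℝ, H.IsFracIndep μ ∧ H.muWidth μ = w} := by
  refine ⟨(Fintype.card V : ℝ), ?_⟩
  rintro w ⟨μ, hμ, rfl⟩
  exact muWidth_le_card H (fun v => (hμ.1 v).2) (fun v => (hμ.1 v).1)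

lemma one_le_aw (H : Hgraph V) {e : Set V} (he : e ∈ H.edges) :
    1 ≤ H.adaptiveWidth := by
  obtain ⟨u₀, hu₀⟩ := H.edge_nonempty e he
  have hu₀v : u₀ ∈ H.verts := H.edge_subset e he hu₀
  classical
  set ι : V → ℝ := fun v => if v = u₀ then 1 else 0 with hι_def
  have hι0 : ∀ v, 0 ≤ ι v := fun v => by simp only [hι_def]; split <;> norm_num
  have hι : H.IsFracIndep ι := by
    refine ⟨fun v => ⟨hι0 v, ?_⟩, fun v hv => ?_, fun f hf => ?_⟩
    · simp only [hι_def]; split <;> norm_num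
    · simp only [hι_def]
      rw [if_neg]; rintro rfl; exact hv hu₀v
    · rw [fsum_eq]
      simp only [hι_def]
      rw [Finset.sum_ite_eq' _ u₀ (fun _ => (1:ℝ))]
      split <;> norm_num
  have h1 : 1 ≤ H.muWidth ι := by
    refine le_csInf (width_nonempty H ι) ?_
    rintro w ⟨td, rfl⟩
    obtain ⟨t, ht⟩ := td.verts_covered u₀ hu₀v
    have hsum : 1 ≤ ∑ᶠ v ∈ td.bag t, ι v := by
      rw [fsum_eq]
      have hmem : u₀ ∈ (Set.toFinite (td.bag t)).toFinset :=
        (Set.Finite.mem_toFinset _).mpr ht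
      have := Finset.single_le_sum (fun v _ => hι0 v) hmem
      simpa [hι_def] using this
    exact hsum.trans (le_ciSup (f := fun t => ∑ᶠ v ∈ td.bag t, ι v)
      (Set.Finite.bddAbove (Set.finite_range _)) t)
  refine h1.trans (le_csSup (aw_bddAbove H) ⟨ι, hι, rfl⟩)

variable {H : Hgraph V} {e : Set V} {he : e ∈ H.edges} {v' : V}

/-- Extend a tree decomposition of `H` to one of `H.extendEdge e he v'` by attaching a
leaf node with bag `insert v' e`. -/
def extendTD (H : Hgraph V) (e : Set V) (he : e ∈ H.edges) (v' : V)
    (hv' : v' ∉ H.verts) (td : H.TreeDecomp) (t₀ : Fin td.n) (ht₀ : e ⊆ td.bag t₀) :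
    (H.extendEdge e he v').TreeDecomp where
  n := td.n + 1
  tree := addLeaf td.tree t₀
  isTree := addLeaf.isTree td.isTree
  bag := fun t => if h : t = Fin.last td.n then insert v' e else td.bag (t.castPred h)
  bag_subset := by
    intro t
    by_cases h : t = Fin.last td.n
    · simp only [dif_pos h]; exact Set.insert_subset_insert (H.edge_subset e he)
    · simp only [dif_neg h]; exact (td.bag_subset _).trans (Set.subset_insert _ _)
  verts_covered := by
    intro v hv
    rcases hv with rfl | hv
    · exact ⟨Fin.last _, by simp only [dif_pos rfl]; exact Set.mem_insert _ _⟩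
    · obtain ⟨t, ht⟩ := td.verts_covered v hv
      refine ⟨t.castSucc, ?_⟩
      simp only [dif_neg (Fin.castSucc_lt_last t).ne, Fin.castPred_castSucc]
      exact ht
  edges_covered := by
    rintro f (⟨hf, -⟩ | hf)
    · obtain ⟨t, ht⟩ := td.edges_covered f hf
      refine ⟨t.castSucc, ?_⟩
      simp only [dif_neg (Fin.castSucc_lt_last t).ne, Fin.castPred_castSucc]
      exact ht
    · rw [Set.mem_singleton_iff] at hf; subst hf
      exact ⟨Fin.last _, by simp only [dif_pos rfl]; exact subset_rfl⟩
  bags_connected := by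
    intro v t₁ t₂ h₁ h₂
    classical
    set B : Fin (td.n + 1) → Set V :=
      fun t => if h : t = Fin.last td.n then insert v' e else td.bag (t.castPred h) with hB
    by_cases hvv' : v = v'
    · subst hvv'
      have hlast : ∀ (t : Fin (td.n + 1)), v ∈ B t → t = Fin.last td.n := by
        intro t ht
        by_contra hne
        simp only [hB, dif_neg hne] at ht
        exact hv' (td.bag_subset _ ht)
      have h : (⟨t₁, h₁⟩ : {t | v ∈ B t}) = ⟨t₂, h₂⟩ :=
        Subtype.ext ((hlast t₁ h₁).trans (hlast t₂ h₂).symm)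
      rw [h]
    · -- v ≠ v'
      have hmemold : ∀ (t : Fin (td.n + 1)) (h : t ≠ Fin.last td.n),
          v ∈ B t → v ∈ td.bag (t.castPred h) := by
        intro t h ht
        simpa only [hB, dif_neg h] using ht
      have hmemold' : ∀ (t : Fin td.n), v ∈ td.bag t → v ∈ B t.castSucc := by
        intro t ht
        simp only [hB, dif_neg (Fin.castSucc_lt_last t).ne, Fin.castPred_castSucc]
        exact ht
      have lift : ∀ (a b : Fin td.n) (ha : v ∈ td.bag a) (hb : v ∈ td.bag b),
          ((addLeaf td.tree t₀).induce {t | v ∈ B t}).Reachable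
            ⟨a.castSucc, hmemold' a ha⟩ ⟨b.castSucc, hmemold' b hb⟩ := by
        intro a b ha hb
        exact (td.bags_connected v a b ha hb).map
          (⟨fun p => ⟨p.1.castSucc, hmemold' p.1 p.2⟩,
            fun hadj => addLeaf.adj_castSucc hadj⟩ :
            (td.tree.induce {t | v ∈ td.bag t}) →g
              ((addLeaf td.tree t₀).induce {t | v ∈ B t}))
      by_cases e₁ : t₁ = Fin.last td.n <;> by_cases e₂ : t₂ = Fin.last td.n
      · have h : (⟨t₁, h₁⟩ : {t | v ∈ B t}) = ⟨t₂, h₂⟩ := Subtype.ext (e₁.trans e₂.symm)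
        rw [h]
      · -- t₁ last, t₂ not
        have hve : v ∈ e := by
          have := h₁
          simp only [hB, e₁, dif_pos] at this
          rcases this with h | h
          · exact absurd h hvv'
          · exact h
        have hvt₀ : v ∈ td.bag t₀ := ht₀ hve
        have hstep : ((addLeaf td.tree t₀).induce {t | v ∈ B t}).Adj
            ⟨t₁, h₁⟩ ⟨t₀.castSucc, hmemold' t₀ hvt₀⟩ := by
          show (addLeaf td.tree t₀).Adj t₁ t₀.castSucc
          rw [e₁]; exact addLeaf.adj_last
        have hreach := lift t₀ (t₂.castPred e₂) hvt₀ (hmemold t₂ e₂ h₂)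
        have hend : (⟨(t₂.castPred e₂).castSucc, hmemold' _ (hmemold t₂ e₂ h₂)⟩ :
            {t | v ∈ B t}) = ⟨t₂, h₂⟩ := Subtype.ext (Fin.castSucc_castPred t₂ e₂)
        rw [hend] at hreach
        exact hstep.reachable.trans hreach
      · -- t₂ last, t₁ not : symmetric
        have hve : v ∈ e := by
          have := h₂
          simp only [hB, e₂, dif_pos] at this
          rcases this with h | h
          · exact absurd h hvv'
          · exact h
        have hvt₀ : v ∈ td.bag t₀ := ht₀ hve
        have hstep : ((addLeaf td.tree t₀).induce {t | v ∈ B t}).Adj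
            ⟨t₂, h₂⟩ ⟨t₀.castSucc, hmemold' t₀ hvt₀⟩ := by
          show (addLeaf td.tree t₀).Adj t₂ t₀.castSucc
          rw [e₂]; exact addLeaf.adj_last
        have hreach := lift (t₁.castPred e₁) t₀ (hmemold t₁ e₁ h₁) hvt₀
        have hend : (⟨(t₁.castPred e₁).castSucc, hmemold' _ (hmemold t₁ e₁ h₁)⟩ :
            {t | v ∈ B t}) = ⟨t₁, h₁⟩ := Subtype.ext (Fin.castSucc_castPred t₁ e₁)
        rw [hend] at hreach
        exact hreach.trans hstep.reachable.symm
      · -- neither last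
        have hreach := lift (t₁.castPred e₁) (t₂.castPred e₂)
          (hmemold t₁ e₁ h₁) (hmemold t₂ e₂ h₂)
        have hend₁ : (⟨(t₁.castPred e₁).castSucc, hmemold' _ (hmemold t₁ e₁ h₁)⟩ :
            {t | v ∈ B t}) = ⟨t₁, h₁⟩ := Subtype.ext (Fin.castSucc_castPred t₁ e₁)
        have hend₂ : (⟨(t₂.castPred e₂).castSucc, hmemold' _ (hmemold t₂ e₂ h₂)⟩ :
            {t | v ∈ B t}) = ⟨t₂, h₂⟩ := Subtype.ext (Fin.castSucc_castPred t₂ e₂)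
        rw [hend₁, hend₂] at hreach
        exact hreach

open scoped Classical in
lemma extendTD_width (hv' : v' ∉ H.verts) (td : H.TreeDecomp)
    (t₀ : Fin td.n) (ht₀ : e ⊆ td.bag t₀) (μ : V → ℝ) (hμ0 : ∀ v, 0 ≤ μ v)
    (hsum : ∑ᶠ v ∈ insert v' e, μ v ≤ 1) :
    (extendTD H e he v' hv' td t₀ ht₀).muWidth μ ≤
      max (td.muWidth (Function.update μ v' 0)) 1 := by
  haveI : Nonempty (Fin (extendTD H e he v' hv' td t₀ ht₀).n) := ⟨⟨0, Nat.succ_pos _⟩⟩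
  apply ciSup_le
  intro t
  show (∑ᶠ w ∈ (@dite _ (t = Fin.last td.n) (instDecidableEqFin _ t (Fin.last td.n))
      (fun _ => insert v' e) fun h => td.bag (t.castPred h)), μ w) ≤ _
  by_cases h : t = Fin.last td.n
  · rw [dif_pos h]
    exact hsum.trans (le_max_right _ _)
  · rw [dif_neg h]
    have hagree : ∑ᶠ w ∈ td.bag (t.castPred h), μ w =
        ∑ᶠ w ∈ td.bag (t.castPred h), Function.update μ v' 0 w := by
      rw [fsum_eq, fsum_eq]
      refine Finset.sum_congr rfl fun w hw => ?_
      have hwv : w ≠ v' := by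
        rintro rfl
        exact hv' (td.bag_subset _ ((Set.Finite.mem_toFinset _).mp hw))
      rw [Function.update_of_ne hwv]
    rw [hagree]
    exact (le_ciSup (f := fun s => ∑ᶠ w ∈ td.bag s, Function.update μ v' 0 w)
      (Set.Finite.bddAbove (Set.finite_range _)) (t.castPred h)).trans (le_max_left _ _)

end Aux

theorem stmt12 {V : Type} [Fintype V] (H : Hgraph V)
    (e : Set V) (he : e ∈ H.edges) (v' : V) (hv' : v' ∉ H.verts) :
    (H.extendEdge e he v').adaptiveWidth ≤ H.adaptiveWidth := by
  classical
  set H' := H.extendEdge e he v' with hH'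
  set S := {w | ∃ μ : V → ℝ, H.IsFracIndep μ ∧ H.muWidth μ = w} with hS
  have h1S : (1 : ℝ) ≤ sSup S := one_le_aw H he
  refine Real.sSup_le ?_ (zero_le_one.trans h1S)
  rintro w ⟨μ, hμ, rfl⟩
  set μt := Function.update μ v' 0 with hμt_def
  have hμt0 : ∀ v, 0 ≤ μt v := by
    intro v
    by_cases hv : v = v'
    · subst hv; rw [hμt_def, Function.update_self]
    · rw [hμt_def, Function.update_of_ne hv]; exact (hμ.1 v).1
  have hμtle : ∀ v, μt v ≤ μ v := by
    intro v
    by_cases hv : v = v'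
    · subst hv; rw [hμt_def, Function.update_self]; exact (hμ.1 _).1
    · rw [hμt_def, Function.update_of_ne hv]
  have hμt : H.IsFracIndep μt := by
    refine ⟨fun v => ⟨hμt0 v, (hμtle v).trans (hμ.1 v).2⟩, fun v hv => ?_, fun f hf => ?_⟩
    · by_cases hvv : v = v'
      · subst hvv; rw [hμt_def, Function.update_self]
      · rw [hμt_def, Function.update_of_ne hvv]
        refine hμ.2.1 v fun hmem => ?_
        rcases hmem with h | h
        · exact hvv h
        · exact hv h
    · have hle : ∑ᶠ v ∈ f, μt v ≤ ∑ᶠ v ∈ f, μ v := by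
        rw [fsum_eq, fsum_eq]
        exact Finset.sum_le_sum fun v _ => hμtle v
      refine hle.trans ?_
      by_cases hfe : f = e
      · subst hfe
        have hsub : ∑ᶠ v ∈ f, μ v ≤ ∑ᶠ v ∈ insert v' f, μ v := by
          rw [fsum_eq, fsum_eq]
          refine Finset.sum_le_sum_of_subset_of_nonneg ?_ fun v _ _ => (hμ.1 v).1
          intro x hx
          rw [Set.Finite.mem_toFinset] at hx ⊢
          exact Set.mem_insert_of_mem _ hx
        exact hsub.trans (hμ.2.2 (insert v' f) (Or.inr rfl))
      · exact hμ.2.2 f (Or.inl ⟨hf, hfe⟩)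
  have hsum1 : ∑ᶠ v ∈ insert v' e, μ v ≤ 1 := hμ.2.2 (insert v' e) (Or.inr rfl)
  -- key bound
  have key : H'.muWidth μ ≤ max (H.muWidth μt) 1 := by
    set A := {w | ∃ td : H.TreeDecomp, td.muWidth μt = w} with hA
    have hAne : A.Nonempty := width_nonempty H μt
    have hAbdd : BddBelow A := width_bddBelow H hμt0
    have hbound : ∀ a ∈ A, H'.muWidth μ ≤ max a 1 := by
      rintro a ⟨td, rfl⟩
      obtain ⟨t₀, ht₀⟩ := td.edges_covered e he
      refine (csInf_le (width_bddBelow H' fun v => (hμ.1 v).1)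
        ⟨extendTD H e he v' hv' td t₀ ht₀, rfl⟩).trans ?_
      exact extendTD_width hv' td t₀ ht₀ μ (fun v => (hμ.1 v).1) hsum1
    rw [show H.muWidth μt = sInf A from rfl]
    rcases le_or_gt 1 (sInf A) with hc | hc
    · rw [max_eq_left hc]
      refine le_csInf hAne fun a ha => ?_
      have h1a : (1 : ℝ) ≤ a := hc.trans (csInf_le hAbdd ha)
      have := hbound a ha
      rwa [max_eq_left h1a] at this
    · rw [max_eq_right hc.le]
      obtain ⟨a, ha, halt⟩ := exists_lt_of_csInf_lt hAne hc
      exact (hbound a ha).trans (max_le halt.le le_rfl)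
  refine key.trans (max_le ?_ h1S)
  exact le_csSup (aw_bddAbove H) ⟨μt, hμt, rfl⟩


end
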